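/- Suppose P is a poset of vertices of a directed graph G (T ≤ T' iff there is a directed path from T to T'), Λ is the unique maximal element, and ~ is the equivalence relation on finite maximal directed paths generated by replacing one side of a polygon (a finite subgraph closed under a pair of local moves with two directed sides sharing source and sink) by the other. If T has only finitely many successors, every directed path from T extends to one terminating at Λ, and for any two outgoing edges at a vertex above T the alternating mutation paths close up into a polygon, then any two directed paths from T to Λ are equivalent under ~. -/

import Mathlib

/-- `l` is a directed path in the graph `G` from `a` to `b`. -/
def IsDirPath {V : Type*} (G : V → V → Prop) (a b : V) (l : List V) : Prop :=
  List.Chain G a l ∧ (a :: l).getLast (List.cons_ne_nil a l) = b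

/-- An elementary polygonal deformation of paths starting at `T`: replace one side of a
polygon (based at the vertex `v` reached by the common initial segment `pre`) by the
other side. -/
def ElemPolyDef {V : Type*} (polygon : V → List V → List V → Prop) (T : V)
    (P Q : List V) : Prop :=
  ∃ (pre mid₁ mid₂ post : List V) (v : V),
    P = pre ++ mid₁ ++ post ∧ Q = pre ++ mid₂ ++ post ∧
    (T :: pre).getLast (List.cons_ne_nil T pre) = v ∧ polygon v mid₁ mid₂

lemma myChainAppend {V : Type*} {G : V → V → Prop} :
    ∀ {v : V} (p e : List V), List.Chain G v (p ++ e) ↔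
      List.Chain G v p ∧ List.Chain G ((v :: p).getLast (List.cons_ne_nil v p)) e := by
  intro v p e
  induction p generalizing v with
  | nil => simp [List.Chain]
  | cons a p ih =>
    simp only [List.Chain] at ih ⊢
    simp [List.isChain_cons_cons, ih, and_assoc]

lemma myGetLast {V : Type*} {v w : V} {l₁ : List V} (l₂ : List V)
    (h : (v :: l₁).getLast (List.cons_ne_nil v l₁) = w) :
    (v :: (l₁ ++ l₂)).getLast (List.cons_ne_nil _ _) =
      (w :: l₂).getLast (List.cons_ne_nil _ _) := by
  cases l₂ with
  | nil => simpa using h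
  | cons b l₂ =>
    rw [List.getLast_cons (List.cons_ne_nil b l₂)]
    have : (v :: (l₁ ++ b :: l₂)) = (v :: l₁) ++ (b :: l₂) := by simp
    rw [List.getLast_congr _ _ this, List.getLast_append_of_ne_nil _ (List.cons_ne_nil b l₂)]
    simp

lemma myPathCons {V : Type*} {G : V → V → Prop} {Λ v w : V} {l : List V} :
    IsDirPath G v Λ (w :: l) ↔ G v w ∧ IsDirPath G w Λ l := by
  unfold IsDirPath
  simp only [List.Chain]
  rw [List.isChain_cons_cons, List.getLast_cons (List.cons_ne_nil w l)]
  tauto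

lemma myTransport {V : Type*} (polygon : V → List V → List V → Prop) (v w : V)
    (s : List V) (hs : (v :: s).getLast (List.cons_ne_nil v s) = w)
    {P Q : List V} (h : Relation.EqvGen (ElemPolyDef polygon w) P Q) :
    Relation.EqvGen (ElemPolyDef polygon v) (s ++ P) (s ++ Q) := by
  induction h with
  | rel P Q h =>
    obtain ⟨pre, mid₁, mid₂, post, u, hP, hQ, hlast, hpoly⟩ := h
    refine Relation.EqvGen.rel _ _ ⟨s ++ pre, mid₁, mid₂, post, u, by simp [hP],
      by simp [hQ], ?_, hpoly⟩
    rw [myGetLast pre hs]; exact hlast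
  | refl P => exact Relation.EqvGen.refl _
  | symm _ _ _ ih => exact Relation.EqvGen.symm _ _ ih
  | trans _ _ _ _ _ ih₁ ih₂ => exact Relation.EqvGen.trans _ _ _ ih₁ ih₂

lemma myAux {V : Type*} (G : V → V → Prop) (Λ T : V)
    (polygon : V → List V → List V → Prop)
    (hacyc : ∀ v, ¬ Relation.TransGen G v v)
    (hΛmax : ∀ w, ¬ G Λ w)
    (hfin : {v | Relation.ReflTransGen G T v}.Finite)
    (hext : ∀ l : List V, List.Chain G T l →
      ∃ l' : List V, IsDirPath G T Λ (l ++ l'))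
    (hpolyside : ∀ v p q, polygon v p q → polygon v q p ∧ p ≠ [] ∧
      List.Chain G v p ∧ List.Chain G v q ∧ p.getLast? = q.getLast?)
    (hpolyexist : ∀ v, Relation.ReflTransGen G T v →
      ∀ w₁ w₂, G v w₁ → G v w₂ → w₁ ≠ w₂ →
        ∃ p q, polygon v p q ∧ p.head? = some w₁ ∧ q.head? = some w₂) :
    ∀ n : ℕ, ∀ (v : V) (r : List V), List.Chain G T r →
      (T :: r).getLast (List.cons_ne_nil T r) = v →
      {u | Relation.ReflTransGen G v u}.ncard ≤ n →
      ∀ C₁ C₂, IsDirPath G v Λ C₁ → IsDirPath G v Λ C₂ →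
        Relation.EqvGen (ElemPolyDef polygon v) C₁ C₂ := by
  intro n
  induction n with
  | zero =>
    intro v r hr hrv hcard C₁ C₂ h₁ h₂
    exfalso
    have hreach : Relation.ReflTransGen G T v :=
      List.relationReflTransGen_of_exists_isChain_cons r hr hrv
    have hfinv : {u | Relation.ReflTransGen G v u}.Finite :=
      hfin.subset (fun u hu => hreach.trans hu)
    have : v ∈ {u | Relation.ReflTransGen G v u} := Relation.ReflTransGen.refl
    have := Set.ncard_pos hfinv |>.mpr ⟨v, this⟩
    omega
  | succ n ih =>
    intro v r hr hrv hcard C₁ C₂ h₁ h₂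
    have hreach : Relation.ReflTransGen G T v :=
      List.relationReflTransGen_of_exists_isChain_cons r hr hrv
    have hfinv : {u | Relation.ReflTransGen G v u}.Finite :=
      hfin.subset (fun u hu => hreach.trans hu)
    -- descent at any successor w of v
    have hdesc : ∀ w, G v w → {u | Relation.ReflTransGen G w u}.ncard ≤ n := by
      intro w hw
      have hss : {u | Relation.ReflTransGen G w u} ⊂ {u | Relation.ReflTransGen G v u} := by
        constructor
        · exact fun u hu => (Relation.ReflTransGen.single hw).trans hu
        · intro hsub
          have : Relation.ReflTransGen G w v := hsub Relation.ReflTransGen.refl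
          exact hacyc v (Relation.TransGen.head' hw this)
      have := Set.ncard_lt_ncard hss hfinv
      omega
    by_cases hvΛ : v = Λ
    · have hnil : ∀ C, IsDirPath G v Λ C → C = [] := by
        intro C hC
        cases C with
        | nil => rfl
        | cons w l =>
          have hGvw := (List.chain_cons.mp hC.1).1
          rw [hvΛ] at hGvw
          exact absurd hGvw (hΛmax w)
      rw [hnil C₁ h₁, hnil C₂ h₂]
      exact Relation.EqvGen.refl _
    · have hne : ∀ C, IsDirPath G v Λ C → C ≠ [] := by
        intro C hC hCnil
        subst hCnil
        exact hvΛ hC.2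
      obtain ⟨w₁, C₁', rfl⟩ := List.exists_cons_of_ne_nil (hne C₁ h₁)
      obtain ⟨w₂, C₂', rfl⟩ := List.exists_cons_of_ne_nil (hne C₂ h₂)
      rw [myPathCons] at h₁ h₂
      -- IH at a successor w, transported to v
      have key : ∀ w D₁ D₂, G v w → IsDirPath G w Λ D₁ → IsDirPath G w Λ D₂ →
          Relation.EqvGen (ElemPolyDef polygon v) (w :: D₁) (w :: D₂) := by
        intro w D₁ D₂ hw hD₁ hD₂
        have hchain : List.Chain G T (r ++ [w]) := by
          rw [myChainAppend, hrv]
          exact ⟨hr, by simp [List.Chain, hw]⟩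
        have hlastw : (T :: (r ++ [w])).getLast (List.cons_ne_nil _ _) = w := by
          rw [myGetLast [w] hrv]; simp
        have := ih w (r ++ [w]) hchain hlastw (hdesc w hw) D₁ D₂ hD₁ hD₂
        exact myTransport polygon v w [w] (by simp) this
      by_cases hww : w₁ = w₂
      · subst hww
        exact key w₁ C₁' C₂' h₁.1 h₁.2 h₂.2
      · obtain ⟨p, q, hpq, hp1, hq1⟩ := hpolyexist v hreach w₁ w₂ h₁.1 h₂.1 hww
        obtain ⟨hqp, hpne, hchp, hchq, hlastpq⟩ := hpolyside v p q hpq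
        have hqne : q ≠ [] := (hpolyside v q p hqp).2.1
        -- extend v :: p to a path reaching Λ
        have hchTrp : List.Chain G T (r ++ p) := by
          rw [myChainAppend, hrv]; exact ⟨hr, hchp⟩
        obtain ⟨e, he⟩ := hext (r ++ p) hchTrp
        rw [List.append_assoc] at he
        obtain ⟨he1, he2⟩ := he
        rw [myChainAppend, hrv] at he1
        have hP1 : List.Chain G v (p ++ e) := he1.2
        have hP2 : (v :: (p ++ e)).getLast (List.cons_ne_nil _ _) = Λ := by
          rw [← myGetLast (p ++ e) hrv]
          exact he2
        -- last of v::p equals last of v::q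
        have hlastvp : (v :: p).getLast (List.cons_ne_nil _ _) =
            (v :: q).getLast (List.cons_ne_nil _ _) := by
          rw [List.getLast_cons hpne, List.getLast_cons hqne]
          have h1 := List.getLast?_eq_getLast hpne
          have h2 := List.getLast?_eq_getLast hqne
          rw [h1, h2] at hlastpq
          exact Option.some_injective _ hlastpq
        have hQ1 : List.Chain G v (q ++ e) := by
          rw [myChainAppend]
          refine ⟨hchq, ?_⟩
          rw [← hlastvp]
          exact ((myChainAppend p e).mp hP1).2
        have hQ2 : (v :: (q ++ e)).getLast (List.cons_ne_nil _ _) = Λ := by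
          rw [myGetLast (l₁ := q) e hlastvp.symm, ← myGetLast (l₁ := p) e rfl]
          exact hP2
        -- P and Q are one polygon move apart
        have hPQ : Relation.EqvGen (ElemPolyDef polygon v) (p ++ e) (q ++ e) :=
          Relation.EqvGen.rel _ _ ⟨[], p, q, e, v, by simp, by simp, by simp, hpq⟩
        -- decompose p and q
        obtain ⟨p', rfl⟩ : ∃ p', p = w₁ :: p' := by
          cases p with
          | nil => simp at hp1
          | cons a l =>
            simp only [List.head?_cons, Option.some.injEq] at hp1
            exact ⟨l, by rw [hp1]⟩
        obtain ⟨q', rfl⟩ : ∃ q', q = w₂ :: q' := by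
          cases q with
          | nil => simp at hq1
          | cons a l =>
            simp only [List.head?_cons, Option.some.injEq] at hq1
            exact ⟨l, by rw [hq1]⟩
        rw [List.cons_append] at hPQ
        have hP : IsDirPath G v Λ (w₁ :: (p' ++ e)) := by
          rw [← List.cons_append]
          exact ⟨hP1, hP2⟩
        have hQ : IsDirPath G v Λ (w₂ :: (q' ++ e)) := by
          rw [← List.cons_append]
          exact ⟨hQ1, hQ2⟩
        rw [myPathCons] at hP hQ
        have e₁ : Relation.EqvGen (ElemPolyDef polygon v) (w₁ :: C₁') (w₁ :: (p' ++ e)) :=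
          key w₁ C₁' (p' ++ e) h₁.1 h₁.2 hP.2
        have e₂ : Relation.EqvGen (ElemPolyDef polygon v) (w₂ :: (q' ++ e)) (w₂ :: C₂') :=
          key w₂ (q' ++ e) C₂' h₂.1 hQ.2 h₂.2
        exact e₁.trans _ _ _ (hPQ.trans _ _ _ e₂)

/-- Abstract form of the main combinatorial lemma: if `T` has only finitely many
successors, there are no directed cycles, `Λ` has no outgoing edges, every directed
path from `T` extends to one terminating at `Λ`, the two sides of a polygon are
directed path segments with common source and target, and any two distinct outgoing
edges at a vertex reachable from `T` close up into a polygon, then any two directed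
paths from `T` to `Λ` are related by the equivalence relation generated by elementary
polygonal deformations. -/
theorem paths_polygonally_equivalent {V : Type*} (G : V → V → Prop) (Λ T : V)
    (polygon : V → List V → List V → Prop)
    (hacyc : ∀ v, ¬ Relation.TransGen G v v)
    (hΛmax : ∀ w, ¬ G Λ w)
    (hfin : {v | Relation.ReflTransGen G T v}.Finite)
    (hext : ∀ l : List V, List.Chain G T l →
      ∃ l' : List V, IsDirPath G T Λ (l ++ l'))
    (hpolyside : ∀ v p q, polygon v p q → polygon v q p ∧ p ≠ [] ∧
      List.Chain G v p ∧ List.Chain G v q ∧ p.getLast? = q.getLast?)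
    (hpolyexist : ∀ v, Relation.ReflTransGen G T v →
      ∀ w₁ w₂, G v w₁ → G v w₂ → w₁ ≠ w₂ →
        ∃ p q, polygon v p q ∧ p.head? = some w₁ ∧ q.head? = some w₂) :
    ∀ C₁ C₂ : List V, IsDirPath G T Λ C₁ → IsDirPath G T Λ C₂ →
      Relation.EqvGen (ElemPolyDef polygon T) C₁ C₂ := by
  intro C₁ C₂ h₁ h₂
  exact myAux G Λ T polygon hacyc hΛmax hfin hext hpolyside hpolyexist
    {u | Relation.ReflTransGen G T u}.ncard T [] (List.Chain.nil) rfl le_rfl C₁ C₂ h₁ h₂
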